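/- For a distillation repeater with parameters as below, the maximum memory occupancy equals Q_Dist = 2M[ (τ_l + τ_p + 2τ_BSM + τ_Dec)/τ + 1 − (1 + τ_BSM/τ)·(n−k)/n ]. -/

import Mathlib

/-- For a distillation repeater allocating 2M memories per step, which from step
s₂ = (τ_l+τ_p+τ_BSM+τ_Dec)/τ frees a fraction (n−k)/n per step (distillation)
and from just after step s₃ = s₂ + τ_BSM/τ frees the remaining fraction k/n per
step (BSMs on distilled links), the maximum memory occupancy equals
2M[(τ_l+τ_p+2τ_BSM+τ_Dec)/τ + 1 − (1+τ_BSM/τ)(n−k)/n]. -/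
theorem dist_repeater_max_memory
    (M n k L P B D : ℕ) (hM : 0 < M) (hn : 0 < n) (hk : 0 < k) (hkn : k ≤ n)
    (τ τl τp τB τD : ℚ) (hτ : 0 < τ)
    (hl : τl = (L : ℚ) * τ) (hp : τp = (P : ℚ) * τ)
    (hB : τB = (B : ℚ) * τ) (hD : τD = (D : ℚ) * τ) :
    IsGreatest
      (Set.range fun j : ℕ =>
        2 * (M : ℚ) * ((j : ℚ) + 1)
          - 2 * M * (((n : ℚ) - k) / n) * max 0 ((j : ℚ) - ((L : ℚ) + P + B + D) + 1)
          - 2 * M * ((k : ℚ) / n) * max 0 ((j : ℚ) - ((L : ℚ) + P + B + D + B)))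
      (2 * (M : ℚ) *
        ((τl + τp + 2 * τB + τD) / τ + 1 - (1 + τB / τ) * (((n : ℚ) - k) / n))) := by
  subst hl hp hB hD
  have hτ' : τ ≠ 0 := ne_of_gt hτ
  have hn' : (0:ℚ) < n := by exact_mod_cast hn
  have hn'' : (n:ℚ) ≠ 0 := ne_of_gt hn'
  have hkQ : (0:ℚ) ≤ k := by positivity
  have hknQ : (k:ℚ) ≤ n := by exact_mod_cast hkn
  have hval : (2 * (M : ℚ) *
      (((L:ℚ)*τ + (P:ℚ)*τ + 2 * ((B:ℚ)*τ) + (D:ℚ)*τ) / τ + 1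
        - (1 + ((B:ℚ)*τ) / τ) * (((n : ℚ) - k) / n)))
      = 2 * (M : ℚ) * (((L:ℚ) + P + B + D + B : ℚ) + 1)
        - 2 * M * (((n : ℚ) - k) / n) * ((B:ℚ) + 1) := by
    field_simp
    ring
  rw [hval]
  constructor
  · refine ⟨L + P + B + D + B, ?_⟩
    push_cast
    have h1 : max (0:ℚ) (((L:ℚ) + P + B + D + B) - ((L:ℚ) + P + B + D) + 1)
        = (B:ℚ) + 1 := by
      rw [max_eq_right] <;> [ring; linarith]
    have h2 : max (0:ℚ) (((L:ℚ) + P + B + D + B) - ((L:ℚ) + P + B + D + B)) = 0 := by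
      simp
    rw [h1, h2]
    ring
  · rintro x ⟨j, rfl⟩
    simp only
    have h1 : ((j:ℚ) - ((L:ℚ) + P + B + D) + 1)
        ≤ max 0 ((j : ℚ) - ((L : ℚ) + P + B + D) + 1) := le_max_right _ _
    have h2 : ((j:ℚ) - ((L:ℚ) + P + B + D + B))
        ≤ max 0 ((j : ℚ) - ((L : ℚ) + P + B + D + B)) := le_max_right _ _
    have hc : (0:ℚ) ≤ ((n:ℚ) - k) / n := by
      apply div_nonneg _ (le_of_lt hn'); linarith
    have hd : (0:ℚ) ≤ (k:ℚ) / n := by positivity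
    have hsum : ((n:ℚ) - k) / n + (k:ℚ) / n = 1 := by field_simp; ring
    have hM' : (0:ℚ) ≤ 2 * M := by positivity
    have e1 := mul_le_mul_of_nonneg_left h1 (mul_nonneg hM' hc)
    have e2 := mul_le_mul_of_nonneg_left h2 (mul_nonneg hM' hd)
    calc 2 * (M : ℚ) * ((j : ℚ) + 1)
          - 2 * M * (((n : ℚ) - k) / n) * max 0 ((j : ℚ) - ((L : ℚ) + P + B + D) + 1)
          - 2 * M * ((k : ℚ) / n) * max 0 ((j : ℚ) - ((L : ℚ) + P + B + D + B))
        ≤ 2 * (M : ℚ) * ((j : ℚ) + 1)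
          - 2 * M * (((n : ℚ) - k) / n) * ((j:ℚ) - ((L:ℚ) + P + B + D) + 1)
          - 2 * M * ((k : ℚ) / n) * ((j:ℚ) - ((L:ℚ) + P + B + D + B)) := by linarith
      _ = 2 * (M : ℚ) * (((L:ℚ) + P + B + D + B : ℚ) + 1)
          - 2 * M * (((n : ℚ) - k) / n) * ((B:ℚ) + 1) := by field_simp; ring
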